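/- arXiv:1708.06643 — 2 statements merged into one kernel-verified Lean document; each statement's English description precedes it below -/
import Mathlib

section
/- For any two symmetric 3×3 real matrices X, Y and any function μ : ℝ≥0 → ℝ with μ ≥ 0, one has (μ(|X|)·X − μ(|Y|)·Y) : (X − Y) ≥ (μ(|X|)|X| − μ(|Y|)|Y|)·(|X| − |Y|). -/
open scoped NNReal

noncomputable def frob (X Y : Matrix (Fin 3) (Fin 3) ℝ) : ℝ :=
  ∑ i, ∑ j, X i j * Y i j

noncomputable def fnorm (X : Matrix (Fin 3) (Fin 3) ℝ) : ℝ :=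
  Real.sqrt (frob X X)

lemma frob_eq_sum_prod (X Y : Matrix (Fin 3) (Fin 3) ℝ) :
    frob X Y = ∑ p : Fin 3 × Fin 3, X p.1 p.2 * Y p.1 p.2 := by
  rw [frob, Fintype.sum_prod_type]

lemma frob_self_nonneg (X : Matrix (Fin 3) (Fin 3) ℝ) : 0 ≤ frob X X := by
  rw [frob_eq_sum_prod]
  exact Finset.sum_nonneg fun p _ => mul_self_nonneg _

lemma fnorm_sq (X : Matrix (Fin 3) (Fin 3) ℝ) : fnorm X ^ 2 = frob X X := by
  unfold fnorm
  exact Real.sq_sqrt (frob_self_nonneg X)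

lemma fnorm_nonneg (X : Matrix (Fin 3) (Fin 3) ℝ) : 0 ≤ fnorm X := Real.sqrt_nonneg _

lemma frob_cauchy (X Y : Matrix (Fin 3) (Fin 3) ℝ) : frob X Y ≤ fnorm X * fnorm Y := by
  have h := Real.sum_mul_le_sqrt_mul_sqrt (Finset.univ : Finset (Fin 3 × Fin 3))
    (fun p => X p.1 p.2) (fun p => Y p.1 p.2)
  rw [frob_eq_sum_prod, fnorm, fnorm, frob_eq_sum_prod, frob_eq_sum_prod]
  simpa [sq] using h

theorem viscosity_lower_bound (μ : ℝ≥0 → ℝ) (hμ0 : ∀ s, 0 ≤ μ s)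
    (X Y : Matrix (Fin 3) (Fin 3) ℝ) (hX : X.IsSymm) (hY : Y.IsSymm) :
    (μ (Real.toNNReal (fnorm X)) * fnorm X - μ (Real.toNNReal (fnorm Y)) * fnorm Y)
        * (fnorm X - fnorm Y)
      ≤ frob (μ (Real.toNNReal (fnorm X)) • X - μ (Real.toNNReal (fnorm Y)) • Y) (X - Y) := by
  set a := μ (Real.toNNReal (fnorm X)) with ha
  set b := μ (Real.toNNReal (fnorm Y)) with hb
  have ha0 : 0 ≤ a := hμ0 _
  have hb0 : 0 ≤ b := hμ0 _
  have hexp : frob (a • X - b • Y) (X - Y)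
      = a * frob X X + b * frob Y Y - (a + b) * frob X Y := by
    simp [frob, Fin.sum_univ_succ, Matrix.sub_apply, Matrix.smul_apply, smul_eq_mul]
    ring
  have hcs := frob_cauchy X Y
  have hx2 := fnorm_sq X
  have hy2 := fnorm_sq Y
  nlinarith [mul_nonneg (add_nonneg ha0 hb0) (sub_nonneg.2 hcs)]
end

section
/- Let H be a Hilbert space and suppose M : H → H is a monotone map (⟪M x − M y, x − y⟫ ≥ 0 for all x, y) and vₙ ⇀ v weakly in H with limsupₙ ⟪M vₙ, vₙ − v⟫ ≤ 0. If M is also hemicontinuous (for all x, w the map t ↦ ⟪M(x + t w), w⟫ is continuous) and bounded on bounded sets, then for every w ∈ H, liminfₙ ⟪M vₙ, vₙ − w⟫ ≥ ⟪M v, v − w⟫. -/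
open RealInnerProductSpace

def WeakConv {E : Type*} [NormedAddCommGroup E] [NormedSpace ℝ E]
    (y : ℕ → E) (y₀ : E) : Prop :=
  ∀ f : E →L[ℝ] ℝ, Filter.Tendsto (fun n => f (y n)) Filter.atTop (nhds (f y₀))

theorem pseudomonotone_of_monotone {H : Type*} [NormedAddCommGroup H]
    [InnerProductSpace ℝ H] [CompleteSpace H]
    (M : H → H)
    (hmono : ∀ x y : H, 0 ≤ ⟪M x - M y, x - y⟫)
    (hhemi : ∀ x w : H, Continuous fun t : ℝ => ⟪M (x + t • w), w⟫)
    (hbdd : ∀ S : Set H, Bornology.IsBounded S → Bornology.IsBounded (M '' S))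
    (v : ℕ → H) (v₀ : H) (hconv : WeakConv v v₀)
    (hlimsup : Filter.limsup (fun n => ⟪M (v n), v n - v₀⟫) Filter.atTop ≤ 0) :
    ∀ w : H, ⟪M v₀, v₀ - w⟫ ≤ Filter.liminf (fun n => ⟪M (v n), v n - w⟫) Filter.atTop := by
  intro w
  -- weak limits of inner products with a fixed vector
  have hwk : ∀ z : H, Filter.Tendsto (fun n => ⟪z, v n - v₀⟫) Filter.atTop (nhds 0) := by
    intro z
    have h1 : Filter.Tendsto (fun n => (innerSL ℝ z) (v n)) Filter.atTop
        (nhds ((innerSL ℝ z) v₀)) := hconv _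
    have h2 := h1.sub (tendsto_const_nhds (x := (innerSL ℝ z) v₀))
    simp only [sub_self] at h2
    convert h2 using 2 with n
    simp [inner_sub_right]
  -- the sequence v is bounded
  have hvb : ∃ C, ∀ n, ‖v n‖ ≤ C := by
    have hpt : ∀ x : H, ∃ C, ∀ n, ‖(innerSL ℝ (v n)) x‖ ≤ C := by
      intro x
      have h1 : Filter.Tendsto (fun n => (innerSL ℝ x) (v n)) Filter.atTop
          (nhds ((innerSL ℝ x) v₀)) := hconv _
      obtain ⟨C, hC⟩ := (Metric.isBounded_range_of_tendsto _ h1).exists_norm_le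
      exact ⟨C, fun n => by
        simpa [real_inner_comm] using hC _ (Set.mem_range_self n)⟩
    obtain ⟨C, hC⟩ := banach_steinhaus hpt
    exact ⟨C, fun n => by simpa [innerSL_apply_norm] using hC n⟩
  obtain ⟨C, hC⟩ := hvb
  -- M (v n) is bounded
  have hMb : ∃ K, ∀ n, ‖M (v n)‖ ≤ K := by
    have h1 : Bornology.IsBounded (Set.range v) :=
      isBounded_iff_forall_norm_le.2 ⟨C, by rintro x ⟨n, rfl⟩; exact hC n⟩
    obtain ⟨K, hK⟩ := (hbdd _ h1).exists_norm_le
    exact ⟨K, fun n => hK _ ⟨v n, Set.mem_range_self n, rfl⟩⟩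
  obtain ⟨K, hK⟩ := hMb
  have hK0 : 0 ≤ K := le_trans (norm_nonneg _) (hK 0)
  set a : ℕ → ℝ := fun n => ⟪M (v n), v n - v₀⟫ with ha_def
  set d : ℕ → ℝ := fun n => ⟪M (v n), v n - w⟫ with hd_def
  -- uniform bounds
  have habs : ∀ n, |a n| ≤ K * (C + ‖v₀‖) := by
    intro n
    calc |a n| ≤ ‖M (v n)‖ * ‖v n - v₀‖ := abs_real_inner_le_norm _ _
      _ ≤ K * (C + ‖v₀‖) := by
          apply mul_le_mul (hK n) (le_trans (norm_sub_le _ _) (by linarith [hC n]))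
            (norm_nonneg _) hK0
  have hdabs : ∀ n, |d n| ≤ K * (C + ‖w‖) := by
    intro n
    calc |d n| ≤ ‖M (v n)‖ * ‖v n - w‖ := abs_real_inner_le_norm _ _
      _ ≤ K * (C + ‖w‖) := by
          apply mul_le_mul (hK n) (le_trans (norm_sub_le _ _) (by linarith [hC n]))
            (norm_nonneg _) hK0
  have hdbdd_le : Filter.IsBoundedUnder (· ≤ ·) Filter.atTop d :=
    (Filter.isBoundedUnder_of ⟨K * (C + ‖w‖), fun n => (abs_le.1 (hdabs n)).2⟩)
  have hdcob : Filter.IsCoboundedUnder (· ≥ ·) Filter.atTop d :=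
    hdbdd_le.isCoboundedUnder_ge
  -- a n → 0
  have hb0 : Filter.Tendsto (fun n => ⟪M v₀, v n - v₀⟫) Filter.atTop (nhds 0) := hwk _
  have hba : ∀ n, ⟪M v₀, v n - v₀⟫ ≤ a n := by
    intro n
    have := hmono (v n) v₀
    rw [inner_sub_left] at this
    linarith
  have hainf : (0 : ℝ) ≤ Filter.liminf a Filter.atTop := by
    have h1 : Filter.liminf (fun n => ⟪M v₀, v n - v₀⟫) Filter.atTop = 0 := hb0.liminf_eq
    calc (0 : ℝ) = Filter.liminf (fun n => ⟪M v₀, v n - v₀⟫) Filter.atTop := h1.symm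
      _ ≤ Filter.liminf a Filter.atTop :=
          Filter.liminf_le_liminf (Filter.Eventually.of_forall hba)
            hb0.isBoundedUnder_ge
            (Filter.IsBoundedUnder.isCoboundedUnder_ge
              (Filter.isBoundedUnder_of ⟨K * (C + ‖v₀‖), fun n => (abs_le.1 (habs n)).2⟩))
  have ha0 : Filter.Tendsto a Filter.atTop (nhds 0) :=
    tendsto_of_le_liminf_of_limsup_le hainf hlimsup
      (Filter.isBoundedUnder_of ⟨K * (C + ‖v₀‖), fun n => (abs_le.1 (habs n)).2⟩)
      (Filter.isBoundedUnder_of ⟨-(K * (C + ‖v₀‖)), fun n => (abs_le.1 (habs n)).1⟩)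
  -- key inequality for each t ∈ (0,1]
  have hkey : ∀ t : ℝ, t ∈ Set.Ioc (0:ℝ) 1 →
      ⟪M (v₀ + t • (w - v₀)), v₀ - w⟫ ≤ Filter.liminf d Filter.atTop := by
    rintro t ⟨ht0, ht1⟩
    set u : H := v₀ + t • (w - v₀) with hu_def
    set g : ℕ → ℝ := fun n => (1 / t) * (⟪M u, v n - u⟫ + (t - 1) * a n) with hg_def
    have hgd : ∀ n, g n ≤ d n := by
      intro n
      have hm := hmono (v n) u
      rw [inner_sub_left] at hm
      have hsplit : ⟪M (v n), v n - u⟫ = a n + t * ⟪M (v n), v₀ - w⟫ := by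
        have : v n - u = (v n - v₀) + t • (v₀ - w) := by
          rw [hu_def]; module
        rw [this, inner_add_right, real_inner_smul_right]
      have hdsplit : d n = a n + ⟪M (v n), v₀ - w⟫ := by
        have : v n - w = (v n - v₀) + (v₀ - w) := by abel
        simp only [hd_def, ha_def, this, inner_add_right]
      have h1 : ⟪M u, v n - u⟫ ≤ a n + t * ⟪M (v n), v₀ - w⟫ := by
        rw [← hsplit]; linarith
      rw [hg_def]
      have h2 : (1 / t) * (⟪M u, v n - u⟫ + (t - 1) * a n) ≤
          (1 / t) * ((a n + t * ⟪M (v n), v₀ - w⟫) + (t - 1) * a n) := by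
        apply mul_le_mul_of_nonneg_left (by linarith) (by positivity)
      refine h2.trans ?_
      have h3 : (a n + t * ⟪M (v n), v₀ - w⟫) + (t - 1) * a n
          = t * (a n + ⟪M (v n), v₀ - w⟫) := by ring
      rw [h3, ← mul_assoc, one_div, inv_mul_cancel₀ (ne_of_gt ht0), one_mul, hdsplit]
    -- limit of g
    have hgl : Filter.Tendsto g Filter.atTop (nhds ⟪M u, v₀ - w⟫) := by
      have h1 : Filter.Tendsto (fun n => ⟪M u, v n - u⟫) Filter.atTop
          (nhds ⟪M u, v₀ - u⟫) := by
        have h2 := hwk (M u)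
        have h3 := h2.add (tendsto_const_nhds (x := ⟪M u, v₀ - u⟫))
        rw [zero_add] at h3
        convert h3 using 2 with n
        rw [← inner_add_right]
        congr 1; abel
      have h4 : Filter.Tendsto (fun n => (t - 1) * a n) Filter.atTop (nhds 0) := by
        simpa using ha0.const_mul (t - 1)
      have h5 := ((h1.add h4).const_mul (1 / t))
      rw [add_zero] at h5
      have h6 : (1 / t) * ⟪M u, v₀ - u⟫ = ⟪M u, v₀ - w⟫ := by
        have : v₀ - u = t • (v₀ - w) := by rw [hu_def]; module
        rw [this, real_inner_smul_right, ← mul_assoc, one_div,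
          inv_mul_cancel₀ (ne_of_gt ht0), one_mul]
      rw [← h6]
      exact h5
    calc ⟪M u, v₀ - w⟫ = Filter.liminf g Filter.atTop := hgl.liminf_eq.symm
      _ ≤ Filter.liminf d Filter.atTop :=
          Filter.liminf_le_liminf (Filter.Eventually.of_forall hgd)
            hgl.isBoundedUnder_ge hdcob
  -- let t → 0⁺ using hemicontinuity
  have hcont : Continuous fun t : ℝ => ⟪M (v₀ + t • (w - v₀)), v₀ - w⟫ := by
    have h1 := hhemi v₀ (w - v₀)
    have h2 : (fun t : ℝ => ⟪M (v₀ + t • (w - v₀)), v₀ - w⟫)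
        = fun t : ℝ => -⟪M (v₀ + t • (w - v₀)), w - v₀⟫ := by
      funext t
      rw [← inner_neg_right]
      congr 1; abel
    rw [h2]
    exact h1.neg
  haveI hne : (nhdsWithin (0:ℝ) (Set.Ioc 0 1)).NeBot := by
    rw [← mem_closure_iff_nhdsWithin_neBot, closure_Ioc one_ne_zero.symm]
    exact ⟨le_refl 0, zero_le_one⟩
  have htend : Filter.Tendsto (fun t : ℝ => ⟪M (v₀ + t • (w - v₀)), v₀ - w⟫)
      (nhdsWithin (0:ℝ) (Set.Ioc 0 1)) (nhds ⟪M v₀, v₀ - w⟫) := by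
    have := (hcont.tendsto 0).mono_left (nhdsWithin_le_nhds (s := Set.Ioc (0:ℝ) 1))
    simpa using this
  exact le_of_tendsto htend (eventually_mem_nhdsWithin.mono fun t ht => hkey t ht)
end
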